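/- Let f, I₀, I₁ : ℝ³ → [0,∞) be measurable, let φ be an orientation-preserving C¹ diffeomorphism of ℝ³, and let ψ be an orientation-preserving C¹ diffeomorphism of ℝ³ that is volume-preserving (|Dψ| ≡ 1) and preserves the density I₀ dx (equivalently, since |Dψ| ≡ 1, I₀∘ψ = I₀) and satisfies f∘ψ = f (which holds, e.g., whenever f = g∘I₀ for a function g, as when f is a soft thresholding of I₀). Then the matching energy E(φ) = ∫_{ℝ³} (1 − √(|Dφ|))²·f dy + ∫_{ℝ³} (√I₀ − √(|Dφ|·I₁∘φ))² dy satisfies E(φ∘ψ) = E(φ). In particular, if φ is a minimizer of E then so is φ∘ψ, so minimizers of the density-matching problem are not unique. -/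

import Mathlib

open MeasureTheory Real

noncomputable section

/-- `ℝ³` as a Euclidean space. -/
abbrev E3 := EuclideanSpace ℝ (Fin 3)

/-- An orientation-preserving C¹ diffeomorphism of ℝ³: a bijection which is C¹ with C¹
inverse and everywhere positive Jacobian determinant. -/
def IsOPDiffeo (χ : E3 → E3) : Prop :=
  Function.Bijective χ ∧ ContDiff ℝ 1 χ ∧ ContDiff ℝ 1 (Function.invFun χ) ∧
    ∀ x, 0 < (fderiv ℝ χ x).det

/-- The weighted diffeomorphic density-matching energy
`E(χ) = ∫ (1 − √|Dχ|)²·f dy + ∫ (√I₀ − √(|Dχ|·I₁∘χ))² dy`. -/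
def matchEnergy (f I₀ I₁ : E3 → ℝ) (χ : E3 → E3) : ℝ :=
  (∫ y : E3, (1 - Real.sqrt ((fderiv ℝ χ y).det)) ^ 2 * f y) +
  ∫ y : E3, (Real.sqrt (I₀ y) - Real.sqrt ((fderiv ℝ χ y).det * I₁ (χ y))) ^ 2

-- change of variables for volume-preserving diffeo
lemma integral_comp_volpres (ψ : E3 → E3) (hψ : IsOPDiffeo ψ)
    (hψvol : ∀ y, (fderiv ℝ ψ y).det = 1) (g : E3 → ℝ) :
    ∫ y : E3, g (ψ y) = ∫ y : E3, g y := by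
  obtain ⟨hbij, hc1, _, _⟩ := hψ
  have hd : ∀ x ∈ (Set.univ : Set E3),
      HasFDerivWithinAt ψ (fderiv ℝ ψ x) Set.univ x := fun x _ =>
    ((hc1.differentiable one_ne_zero x).hasFDerivAt).hasFDerivWithinAt
  have := integral_image_eq_integral_abs_det_fderiv_smul (μ := volume)
    MeasurableSet.univ hd (hbij.injective.injOn) g
  rw [Set.image_univ, hbij.surjective.range_eq] at this
  simp only [hψvol, abs_one, one_smul, Measure.restrict_univ] at this
  exact this.symm

lemma det_fderiv_comp (φ ψ : E3 → E3) (hφ : ContDiff ℝ 1 φ) (hψ : ContDiff ℝ 1 ψ)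
    (hψvol : ∀ y, (fderiv ℝ ψ y).det = 1) (y : E3) :
    (fderiv ℝ (φ ∘ ψ) y).det = (fderiv ℝ φ (ψ y)).det := by
  have h := fderiv_comp y ((hφ.differentiable one_ne_zero) (ψ y))
    ((hψ.differentiable one_ne_zero) y)
  rw [h, ContinuousLinearMap.det, ContinuousLinearMap.toLinearMap_comp, LinearMap.det_comp]
  rw [show LinearMap.det ((fderiv ℝ ψ y) : E3 →ₗ[ℝ] E3) = (fderiv ℝ ψ y).det from rfl,
    hψvol, mul_one]

/-- **Non-uniqueness of minimizers of the density-matching energy.**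
Let `f, I₀, I₁ : ℝ³ → [0,∞)` be measurable, `φ` an orientation-preserving C¹ diffeomorphism
of ℝ³, and `ψ` an orientation-preserving C¹ diffeomorphism that is volume-preserving
(`|Dψ| ≡ 1`), preserves the density `I₀ dx` (`I₀ ∘ ψ = I₀`), and satisfies `f ∘ ψ = f`.
Then `E(φ ∘ ψ) = E(φ)`; in particular if `φ` minimizes `E` over orientation-preserving C¹
diffeomorphisms then so does `φ ∘ ψ`. -/
theorem matchEnergy_comp_stabilizer
    (f I₀ I₁ : E3 → ℝ)
    (hfm : Measurable f) (hI₀m : Measurable I₀) (hI₁m : Measurable I₁)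
    (hf0 : ∀ x, 0 ≤ f x) (hI₀0 : ∀ x, 0 ≤ I₀ x) (hI₁0 : ∀ x, 0 ≤ I₁ x)
    (φ ψ : E3 → E3)
    (hφ : IsOPDiffeo φ) (hψ : IsOPDiffeo ψ)
    (hψvol : ∀ y, (fderiv ℝ ψ y).det = 1)
    (hI₀ψ : I₀ ∘ ψ = I₀) (hfψ : f ∘ ψ = f) :
    matchEnergy f I₀ I₁ (φ ∘ ψ) = matchEnergy f I₀ I₁ φ ∧
    ((∀ χ, IsOPDiffeo χ → matchEnergy f I₀ I₁ φ ≤ matchEnergy f I₀ I₁ χ) →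
      ∀ χ, IsOPDiffeo χ → matchEnergy f I₀ I₁ (φ ∘ ψ) ≤ matchEnergy f I₀ I₁ χ) := by
  have key : matchEnergy f I₀ I₁ (φ ∘ ψ) = matchEnergy f I₀ I₁ φ := by
    unfold matchEnergy
    have hdet := det_fderiv_comp φ ψ hφ.2.1 hψ.2.1 hψvol
    have h1 : (∫ y : E3, (1 - Real.sqrt ((fderiv ℝ (φ ∘ ψ) y).det)) ^ 2 * f y)
        = ∫ y : E3, (1 - Real.sqrt ((fderiv ℝ φ y).det)) ^ 2 * f y := by
      have := integral_comp_volpres ψ hψ hψvol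
        (fun y => (1 - Real.sqrt ((fderiv ℝ φ y).det)) ^ 2 * f y)
      rw [← this]
      congr 1; ext y
      rw [hdet y, ← congrFun hfψ y]
      rfl
    have h2 : (∫ y : E3, (Real.sqrt (I₀ y)
          - Real.sqrt ((fderiv ℝ (φ ∘ ψ) y).det * I₁ ((φ ∘ ψ) y))) ^ 2)
        = ∫ y : E3, (Real.sqrt (I₀ y) - Real.sqrt ((fderiv ℝ φ y).det * I₁ (φ y))) ^ 2 := by
      have := integral_comp_volpres ψ hψ hψvol
        (fun y => (Real.sqrt (I₀ y) - Real.sqrt ((fderiv ℝ φ y).det * I₁ (φ y))) ^ 2)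
      rw [← this]
      congr 1; ext y
      rw [hdet y, ← congrFun hI₀ψ y]
      rfl
    rw [h1, h2]
  refine ⟨key, fun hmin χ hχ => ?_⟩
  rw [key]; exact hmin χ hχ
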